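/- With the projection setup below, V̄_i r_i = V̄_i V̄_i^H r for each i = 1,…,d, and the d+1 vectors ĉ := (∏_{i=1}^d (I − V̄_i V̄_i^H)) c and V̄_1 V̄_1^H r, …, V̄_d V̄_d^H r are mutually orthogonal; in particular ‖r‖₂² = Σ_{i=1}^d ‖r_i‖₂² + ‖ĉ‖₂². -/

import Mathlib

open Matrix

/-- Sizes of the mixed index space in which the `i`-th slot keeps size `n i`
and all other slots are projected to size `m j`. -/
def mixN {d : ℕ} (n m : Fin d → ℕ) (i j : Fin d) : ℕ := if j = i then n j else m j

/-- Kronecker sum `Σⱼ I ⊗ ⋯ ⊗ Bⱼ ⊗ ⋯ ⊗ I`, encoded entrywise on the (dependent)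
product index set. -/
noncomputable def kronSum {d : ℕ} (N : Fin d → ℕ)
    (B : ∀ j, Matrix (Fin (N j)) (Fin (N j)) ℂ) :
    Matrix (∀ j, Fin (N j)) (∀ j, Fin (N j)) ℂ :=
  ∑ j, Matrix.of fun p q =>
    B j (p j) (q j) * ∏ l ∈ Finset.univ.erase j, (if p l = q l then (1 : ℂ) else 0)

/-- The `d`-fold Kronecker product, encoded entrywise. -/
noncomputable def bigKron {d : ℕ} {N M : Fin d → ℕ}
    (V : ∀ j, Matrix (Fin (N j)) (Fin (M j)) ℂ) :
    Matrix (∀ j, Fin (N j)) (∀ j, Fin (M j)) ℂ :=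
  Matrix.of fun p q => ∏ j, V j (p j) (q j)

/-- `V̄ᵢ = V_d ⊗ ⋯ ⊗ V_{i+1} ⊗ I_{nᵢ} ⊗ V_{i-1} ⊗ ⋯ ⊗ V₁`. -/
noncomputable def VbarM {d : ℕ} (n m : Fin d → ℕ)
    (V : ∀ j, Matrix (Fin (n j)) (Fin (m j)) ℂ) (i : Fin d) :
    Matrix (∀ j, Fin (n j)) (∀ j, Fin (mixN n m i j)) ℂ :=
  Matrix.of fun p q => ∏ j,
    if h : j = i then (if p j = Fin.cast (by simp [mixN, h]) (q j) then (1 : ℂ) else 0)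
    else V j (p j) (Fin.cast (by simp [mixN, h]) (q j))

/-- `𝐕ᵢ = I_{m_d} ⊗ ⋯ ⊗ I_{m_{i+1}} ⊗ Vᵢ ⊗ I_{m_{i-1}} ⊗ ⋯ ⊗ I_{m₁}`. -/
noncomputable def ViM {d : ℕ} (n m : Fin d → ℕ)
    (V : ∀ j, Matrix (Fin (n j)) (Fin (m j)) ℂ) (i : Fin d) :
    Matrix (∀ j, Fin (mixN n m i j)) (∀ j, Fin (m j)) ℂ :=
  Matrix.of fun p q => ∏ j,
    if h : j = i then V j (Fin.cast (by simp [mixN, h]) (p j)) (q j)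
    else (if Fin.cast (show mixN n m i j = m j by simp [mixN, h]) (p j) = q j
      then (1 : ℂ) else 0)

/-- `Mᵢ`: the Kronecker sum whose `j`-th term carries `Aⱼ^{(k)} = VⱼᴴAⱼVⱼ` in slot
`j ≠ i` and `Aᵢ` in slot `i`, the identities having size `m_l` (`l ≠ i`) resp. `nᵢ`. -/
noncomputable def MiM {d : ℕ} (n m : Fin d → ℕ)
    (A : ∀ j, Matrix (Fin (n j)) (Fin (n j)) ℂ)
    (V : ∀ j, Matrix (Fin (n j)) (Fin (m j)) ℂ) (i : Fin d) :
    Matrix (∀ j, Fin (mixN n m i j)) (∀ j, Fin (mixN n m i j)) ℂ :=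
  kronSum (mixN n m i) fun j =>
    if h : j = i then
      Matrix.reindex (finCongr (show n j = mixN n m i j by simp [mixN, h]))
        (finCongr (show n j = mixN n m i j by simp [mixN, h])) (A j)
    else
      Matrix.reindex (finCongr (show m j = mixN n m i j by simp [mixN, h]))
        (finCongr (show m j = mixN n m i j by simp [mixN, h])) ((V j)ᴴ * A j * V j)


section KronBasics
variable {d : ℕ}

theorem bigKron_conjT {N M : Fin d → ℕ} (U : ∀ j, Matrix (Fin (N j)) (Fin (M j)) ℂ) :
    (bigKron U)ᴴ = bigKron (fun j => (U j)ᴴ) := by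
  ext p q
  simp [bigKron, conjTranspose_apply, map_prod]

theorem bigKron_mul {N M K : Fin d → ℕ} (U : ∀ j, Matrix (Fin (N j)) (Fin (M j)) ℂ)
    (W : ∀ j, Matrix (Fin (M j)) (Fin (K j)) ℂ) :
    bigKron U * bigKron W = bigKron (fun j => U j * W j) := by
  ext p q
  simp only [mul_apply, bigKron, of_apply, ← Finset.prod_mul_distrib]
  rw [show (fun j => ∑ x, U j (p j) x * W j x (q j)) = fun j => ∑ x : Fin (M j), U j (p j) x * W j x (q j) from rfl,
    ← Fintype.prod_sum (fun j (x : Fin (M j)) => U j (p j) x * W j x (q j))]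

theorem bigKron_one {N : Fin d → ℕ} :
    bigKron (fun j => (1 : Matrix (Fin (N j)) (Fin (N j)) ℂ)) = 1 := by
  ext p q
  simp only [bigKron, of_apply, Matrix.one_apply]
  by_cases h : p = q
  · subst h; simp
  · rw [if_neg h]
    obtain ⟨j, hj⟩ := Function.ne_iff.mp h
    exact Finset.prod_eq_zero (Finset.mem_univ j) (by rw [if_neg hj])

theorem kronSum_eq_sum {N : Fin d → ℕ} (B : ∀ j, Matrix (Fin (N j)) (Fin (N j)) ℂ) :
    kronSum N B = ∑ j, bigKron (fun l => if l = j then B l else 1) := by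
  unfold kronSum
  refine Finset.sum_congr rfl fun j _ => ?_
  ext p q
  simp only [bigKron, of_apply]
  rw [← Finset.mul_prod_erase Finset.univ _ (Finset.mem_univ j), if_pos rfl]
  congr 1
  refine Finset.prod_congr rfl fun l hl => ?_
  rw [if_neg (Finset.ne_of_mem_erase hl), Matrix.one_apply]

end KronBasics
section Slots
variable {d : ℕ} (n m : Fin d → ℕ) (V : ∀ j, Matrix (Fin (n j)) (Fin (m j)) ℂ)

/-- slot matrices of `VbarM`. -/
noncomputable def Wb (i j : Fin d) : Matrix (Fin (n j)) (Fin (mixN n m i j)) ℂ :=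
  if h : j = i then (1 : Matrix (Fin (n j)) (Fin (n j)) ℂ).submatrix id
      (Fin.cast (show mixN n m i j = n j by simp [mixN, h]))
  else (V j).submatrix id (Fin.cast (show mixN n m i j = m j by simp [mixN, h]))

/-- slot matrices of `ViM`. -/
noncomputable def Wi (i j : Fin d) : Matrix (Fin (mixN n m i j)) (Fin (m j)) ℂ :=
  if h : j = i then (V j).submatrix
      (Fin.cast (show mixN n m i j = n j by simp [mixN, h])) id
  else (1 : Matrix (Fin (m j)) (Fin (m j)) ℂ).submatrix
      (Fin.cast (show mixN n m i j = m j by simp [mixN, h])) id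

theorem VbarM_eq (i : Fin d) : VbarM n m V i = bigKron (Wb n m V i) := by
  ext p q
  simp only [VbarM, bigKron, of_apply]
  refine Finset.prod_congr rfl fun j _ => ?_
  by_cases h : j = i
  · simp [Wb, h, Matrix.one_apply]
  · simp [Wb, h]

theorem ViM_eq (i : Fin d) : ViM n m V i = bigKron (Wi n m V i) := by
  ext p q
  simp only [ViM, bigKron, of_apply]
  refine Finset.prod_congr rfl fun j _ => ?_
  by_cases h : j = i
  · simp [Wi, h]
  · simp [Wi, h, Matrix.one_apply]

variable (hV : ∀ i, (V i)ᴴ * V i = 1)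
include hV

theorem Wb_conjT_mul_Wb (i j : Fin d) : (Wb n m V i j)ᴴ * Wb n m V i j = 1 := by
  unfold Wb
  by_cases h : j = i
  · rw [dif_pos h, conjTranspose_submatrix, conjTranspose_one,
      show (id : Fin (n j) → Fin (n j)) = ⇑(Equiv.refl (Fin (n j))) from rfl,
      submatrix_mul_equiv, one_mul]
    exact submatrix_one_equiv (finCongr (by simp [mixN, h]))
  · rw [dif_neg h, conjTranspose_submatrix,
      show (id : Fin (n j) → Fin (n j)) = ⇑(Equiv.refl (Fin (n j))) from rfl,
      submatrix_mul_equiv, hV j]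
    exact submatrix_one_equiv (finCongr (by simp [mixN, h]))

omit hV in
theorem Wb_mul_Wi (i j : Fin d) : Wb n m V i j * Wi n m V i j = V j := by
  unfold Wb Wi
  by_cases h : j = i
  · rw [dif_pos h, dif_pos h,
      show (Fin.cast (show mixN n m i j = n j by simp [mixN, h])) =
        ⇑(finCongr (show mixN n m i j = n j by simp [mixN, h])) from rfl,
      submatrix_mul_equiv]
    simp
  · rw [dif_neg h, dif_neg h,
      show (Fin.cast (show mixN n m i j = m j by simp [mixN, h])) =
        ⇑(finCongr (show mixN n m i j = m j by simp [mixN, h])) from rfl,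
      submatrix_mul_equiv]
    simp

omit hV in
theorem Wb_mul_conjT (i j : Fin d) :
    Wb n m V i j * (Wb n m V i j)ᴴ = if j = i then 1 else V j * (V j)ᴴ := by
  unfold Wb
  by_cases h : j = i
  · rw [if_pos h, dif_pos h, conjTranspose_submatrix, conjTranspose_one,
      show (Fin.cast (show mixN n m i j = n j by simp [mixN, h])) =
        ⇑(finCongr (show mixN n m i j = n j by simp [mixN, h])) from rfl,
      submatrix_mul_equiv, one_mul, submatrix_id_id]
  · rw [if_neg h, dif_neg h, conjTranspose_submatrix,
      show (Fin.cast (show mixN n m i j = m j by simp [mixN, h])) =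
        ⇑(finCongr (show mixN n m i j = m j by simp [mixN, h])) from rfl,
      submatrix_mul_equiv, submatrix_id_id]

end Slots
section Slots2

theorem mul_submatrix_id {l m n o : Type*} [Fintype m] (X : Matrix l m ℂ) (Y : Matrix m n ℂ)
    (g : o → n) : X * Y.submatrix id g = (X * Y).submatrix id g := by
  ext p q; simp [Matrix.mul_apply]

theorem submatrix_id_mul {l m n o : Type*} [Fintype m] (X : Matrix l m ℂ) (Y : Matrix m n ℂ)
    (f : o → l) : X.submatrix f id * Y = (X * Y).submatrix f id := by
  ext p q; simp [Matrix.mul_apply]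

theorem submatrix_mul_submatrix' {l m n o p : Type*} [Fintype m] (X : Matrix l m ℂ)
    (Y : Matrix m n ℂ) (f : o → l) (g : p → n) :
    X.submatrix f id * Y.submatrix id g = (X * Y).submatrix f g := by
  ext p q; simp [Matrix.mul_apply]

variable {d : ℕ} (n m : Fin d → ℕ) (V : ∀ j, Matrix (Fin (n j)) (Fin (m j)) ℂ)
  (A : ∀ j, Matrix (Fin (n j)) (Fin (n j)) ℂ)

theorem Wb_conjT_A_Wb (i j : Fin d) :
    (Wb n m V i j)ᴴ * A j * Wb n m V i j =
    (if h : j = i then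
      Matrix.reindex (finCongr (show n j = mixN n m i j by simp [mixN, h]))
        (finCongr (show n j = mixN n m i j by simp [mixN, h])) (A j)
    else
      Matrix.reindex (finCongr (show m j = mixN n m i j by simp [mixN, h]))
        (finCongr (show m j = mixN n m i j by simp [mixN, h])) ((V j)ᴴ * A j * V j)) := by
  unfold Wb
  by_cases h : j = i
  · rw [dif_pos h, dif_pos h, conjTranspose_submatrix, conjTranspose_one, Matrix.mul_assoc,
      show (id : Fin (n j) → Fin (n j)) = ⇑(Equiv.refl (Fin (n j))) from rfl,
      mul_submatrix_one, one_submatrix_mul]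
    rfl
  · rw [dif_neg h, dif_neg h, conjTranspose_submatrix, Matrix.mul_assoc,
      mul_submatrix_id, submatrix_mul_submatrix', reindex_apply, ← Matrix.mul_assoc]
    rfl

end Slots2
section Global
variable {d : ℕ} (n m : Fin d → ℕ) (V : ∀ j, Matrix (Fin (n j)) (Fin (m j)) ℂ)
  (A : ∀ j, Matrix (Fin (n j)) (Fin (n j)) ℂ) (hV : ∀ i, (V i)ᴴ * V i = 1)

include hV in
theorem Vbar_t_Vbar (i : Fin d) : (VbarM n m V i)ᴴ * VbarM n m V i = 1 := by
  rw [VbarM_eq, bigKron_conjT, bigKron_mul]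
  rw [show (fun j => (Wb n m V i j)ᴴ * Wb n m V i j)
      = (fun j => (1 : Matrix (Fin (mixN n m i j)) (Fin (mixN n m i j)) ℂ)) from
    funext fun j => Wb_conjT_mul_Wb n m V hV i j]
  exact bigKron_one

theorem Vbar_mul_Vi (i : Fin d) : VbarM n m V i * ViM n m V i = bigKron V := by
  rw [VbarM_eq, ViM_eq, bigKron_mul,
    show (fun j => Wb n m V i j * Wi n m V i j) = V from funext fun j => Wb_mul_Wi n m V i j]

include hV in
theorem Kv_t_Kv : (bigKron V)ᴴ * bigKron V = 1 := by
  rw [bigKron_conjT, bigKron_mul,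
    show (fun j => (V j)ᴴ * V j) = (fun j => (1 : Matrix (Fin (m j)) (Fin (m j)) ℂ)) from
      funext fun j => hV j]
  exact bigKron_one

include hV in
theorem Vbar_A_Vbar (i : Fin d) :
    (VbarM n m V i)ᴴ * kronSum n A * VbarM n m V i = MiM n m A V i := by
  rw [VbarM_eq, bigKron_conjT, kronSum_eq_sum, Matrix.mul_sum, Matrix.sum_mul,
    MiM, kronSum_eq_sum]
  refine Finset.sum_congr rfl fun j _ => ?_
  rw [Matrix.mul_assoc, bigKron_mul, bigKron_mul,
    show (fun l => (Wb n m V i l)ᴴ * ((if l = j then A l else 1) * Wb n m V i l))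
      = (fun l => if l = j then
          (if h : l = i then
            Matrix.reindex (finCongr (show n l = mixN n m i l by simp [mixN, h]))
              (finCongr (show n l = mixN n m i l by simp [mixN, h])) (A l)
          else
            Matrix.reindex (finCongr (show m l = mixN n m i l by simp [mixN, h]))
              (finCongr (show m l = mixN n m i l by simp [mixN, h])) ((V l)ᴴ * A l * V l))
        else 1) from funext fun l => ?_]
  by_cases h : l = j
  · rw [if_pos h, if_pos h, ← Matrix.mul_assoc]
    exact Wb_conjT_A_Wb n m V A i l
  · rw [if_neg h, if_neg h, Matrix.one_mul]
    exact Wb_conjT_mul_Wb n m V hV i l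

include hV in
theorem Kv_A_Kv :
    (bigKron V)ᴴ * kronSum n A * bigKron V = kronSum m (fun i => (V i)ᴴ * A i * V i) := by
  rw [bigKron_conjT, kronSum_eq_sum, Matrix.mul_sum, Matrix.sum_mul, kronSum_eq_sum]
  refine Finset.sum_congr rfl fun j _ => ?_
  rw [Matrix.mul_assoc, bigKron_mul, bigKron_mul,
    show (fun l => (V l)ᴴ * ((if l = j then A l else 1) * V l))
      = (fun l => if l = j then (V l)ᴴ * A l * V l else 1) from funext fun l => ?_]
  by_cases h : l = j
  · rw [if_pos h, if_pos h, ← Matrix.mul_assoc]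
  · rw [if_neg h, if_neg h, Matrix.one_mul, hV l]

theorem Pp_eq (i : Fin d) : VbarM n m V i * (VbarM n m V i)ᴴ
    = bigKron (fun l => if l = i then 1 else V l * (V l)ᴴ) := by
  rw [VbarM_eq, bigKron_conjT, bigKron_mul,
    show (fun l => Wb n m V i l * (Wb n m V i l)ᴴ)
      = (fun l => if l = i then 1 else V l * (V l)ᴴ) from funext fun l => Wb_mul_conjT n m V i l]

end Global
section Proj
variable {d : ℕ} (n m : Fin d → ℕ) (V : ∀ j, Matrix (Fin (n j)) (Fin (m j)) ℂ)
  (A : ∀ j, Matrix (Fin (n j)) (Fin (n j)) ℂ) (hV : ∀ i, (V i)ᴴ * V i = 1)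

/-- the projector `Pᵢ = V̄ᵢ V̄ᵢᴴ`. -/
noncomputable def Pp (i : Fin d) : Matrix (∀ j, Fin (n j)) (∀ j, Fin (n j)) ℂ :=
  VbarM n m V i * (VbarM n m V i)ᴴ

/-- the projector `P = 𝐕𝐕ᴴ`. -/
noncomputable def PP : Matrix (∀ j, Fin (n j)) (∀ j, Fin (n j)) ℂ :=
  bigKron V * (bigKron V)ᴴ

theorem PP_eq : PP n m V = bigKron (fun l => V l * (V l)ᴴ) := by
  rw [PP, bigKron_conjT, bigKron_mul]

theorem Pp_conjT (i : Fin d) : (Pp n m V i)ᴴ = Pp n m V i := by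
  rw [Pp, conjTranspose_mul, conjTranspose_conjTranspose]

include hV in
theorem Pp_idem (i : Fin d) : Pp n m V i * Pp n m V i = Pp n m V i := by
  rw [Pp, Matrix.mul_assoc, ← Matrix.mul_assoc (VbarM n m V i)ᴴ, Vbar_t_Vbar n m V hV,
    Matrix.one_mul]

include hV in
theorem Pp_mul_Pp {i j : Fin d} (hij : i ≠ j) : Pp n m V i * Pp n m V j = PP n m V := by
  rw [Pp, Pp, Pp_eq, Pp_eq, PP_eq, bigKron_mul,
    show (fun l => (if l = i then 1 else V l * (V l)ᴴ) * (if l = j then 1 else V l * (V l)ᴴ))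
      = (fun l => V l * (V l)ᴴ) from funext fun l => ?_]
  by_cases h : l = i
  · rw [if_pos h, if_neg (by rw [h]; exact hij.symm ∘ Eq.symm), Matrix.one_mul]
  · rw [if_neg h]
    by_cases h2 : l = j
    · rw [if_pos h2, Matrix.mul_one]
    · rw [if_neg h2, Matrix.mul_assoc, ← Matrix.mul_assoc (V l)ᴴ, hV l, Matrix.one_mul]

include hV in
theorem Pp_mul_EKv (i : Fin d) :
    Pp n m V i * (bigKron (fun l => if l = i then A l else 1) * bigKron V)
      = bigKron (fun l => if l = i then A l else 1) * bigKron V := by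
  rw [Pp, Pp_eq, bigKron_mul, bigKron_mul,
    show (fun l => (if l = i then 1 else V l * (V l)ᴴ) * ((if l = i then A l else 1) * V l))
      = (fun l => (if l = i then A l else 1) * V l) from funext fun l => ?_]
  by_cases h : l = i
  · rw [if_pos h, if_pos h, Matrix.one_mul]
  · rw [if_neg h, if_neg h, Matrix.one_mul, Matrix.mul_assoc, hV l, Matrix.mul_one]

end Proj
section Lists
variable {d : ℕ} (n m : Fin d → ℕ) (V : ∀ j, Matrix (Fin (n j)) (Fin (m j)) ℂ)
  (hV : ∀ i, (V i)ᴴ * V i = 1)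

/-- `1 - Pₗ`. -/
noncomputable def fM (l : Fin d) : Matrix (∀ j, Fin (n j)) (∀ j, Fin (n j)) ℂ :=
  1 - Pp n m V l

include hV in
theorem fM_commute (l k : Fin d) : Commute (fM n m V l) (fM n m V k) := by
  rcases eq_or_ne l k with h | h
  · rw [h]
  · unfold Commute SemiconjBy fM
    simp only [sub_mul, mul_sub, Matrix.one_mul, Matrix.mul_one]
    rw [Pp_mul_Pp n m V hV h, Pp_mul_Pp n m V hV h.symm]
    abel

theorem fM_conjT (l : Fin d) : (fM n m V l)ᴴ = fM n m V l := by
  rw [fM, conjTranspose_sub, conjTranspose_one, Pp_conjT]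

include hV in
theorem pairwise_commute (L : List (Fin d)) :
    (L.map (fM n m V)).Pairwise Commute := by
  exact List.pairwise_map.mpr
    (List.pairwise_of_forall fun a b => fM_commute n m V hV a b)

include hV in
theorem prod_perm_erase (L : List (Fin d)) {i : Fin d} (hi : i ∈ L) :
    (L.map (fM n m V)).prod = ((L.erase i).map (fM n m V)).prod * fM n m V i := by
  have h1 : (L.map (fM n m V)).Perm (((L.erase i).map (fM n m V)) ++ [fM n m V i]) := by
    refine ((List.perm_cons_erase hi).map (fM n m V)).trans ?_
    exact (List.perm_append_singleton _ _).symm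
  rw [h1.prod_eq' (pairwise_commute n m V hV L), List.prod_append, List.prod_singleton]

include hV in
theorem prod_kill {β : Type*} (L : List (Fin d)) {i : Fin d} (hi : i ∈ L)
    (X : Matrix (∀ j, Fin (n j)) β ℂ) (hX : fM n m V i * X = 0) :
    (L.map (fM n m V)).prod * X = 0 := by
  rw [prod_perm_erase n m V hV L hi, Matrix.mul_assoc, hX, Matrix.mul_zero]

include hV in
theorem prod_conjT (L : List (Fin d)) :
    ((L.map (fM n m V)).prod)ᴴ = (L.map (fM n m V)).prod := by
  rw [conjTranspose_list_prod, List.map_map,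
    show conjTranspose ∘ fM n m V = fM n m V from funext fun l => fM_conjT n m V l,
    ← List.map_reverse]
  exact ((L.reverse_perm).map (fM n m V)).prod_eq' (pairwise_commute n m V hV L.reverse)

include hV in
theorem prod_mulVec (r : (∀ j, Fin (n j)) → ℂ) (hr : PP n m V *ᵥ r = 0)
    (L : List (Fin d)) (hL : L.Nodup) :
    (L.map (fM n m V)).prod *ᵥ r = r - (L.map (fun l => Pp n m V l *ᵥ r)).sum := by
  induction L with
  | nil => simp
  | cons a L ih =>
    obtain ⟨ha, hnd⟩ := List.nodup_cons.mp hL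
    simp only [List.map_cons, List.prod_cons, List.sum_cons]
    rw [← Matrix.mulVec_mulVec, ih hnd, fM, Matrix.sub_mulVec, Matrix.one_mulVec,
      Matrix.mulVec_sub]
    have hS : Pp n m V a *ᵥ (L.map (fun l => Pp n m V l *ᵥ r)).sum = 0 := by
      rw [show Pp n m V a *ᵥ (L.map (fun l => Pp n m V l *ᵥ r)).sum
          = (Matrix.mulVecLin (Pp n m V a)) (L.map (fun l => Pp n m V l *ᵥ r)).sum from rfl,
        map_list_sum, List.map_map]
      refine List.sum_eq_zero fun x hx => ?_
      obtain ⟨l, hl, rfl⟩ := List.mem_map.mp hx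
      have hal : a ≠ l := fun h => ha (h ▸ hl)
      simp only [Function.comp_apply, Matrix.mulVecLin_apply, Matrix.mulVec_mulVec,
        Pp_mul_Pp n m V hV hal, hr]
    rw [hS]
    abel

end Lists
theorem dotProduct_listSum {ι n : Type*} [Fintype n] (v : n → ℂ) (L : List (n → ℂ)) :
    v ⬝ᵥ L.sum = (L.map (fun w => v ⬝ᵥ w)).sum := by
  induction L with
  | nil => simp
  | cons a L ih => simp [dotProduct_add, ih]

theorem dotProduct_finsum {ι n : Type*} [Fintype n] (s : Finset ι) (v : n → ℂ)
    (w : ι → n → ℂ) : v ⬝ᵥ (∑ i ∈ s, w i) = ∑ i ∈ s, v ⬝ᵥ w i := by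
  classical
  induction s using Finset.induction with
  | empty => simp
  | insert _ _ h ih => simp [Finset.sum_insert h, dotProduct_add, ih]

theorem finsum_dotProduct {ι n : Type*} [Fintype n] (s : Finset ι) (v : n → ℂ)
    (w : ι → n → ℂ) : (∑ i ∈ s, w i) ⬝ᵥ v = ∑ i ∈ s, w i ⬝ᵥ v := by
  classical
  induction s using Finset.induction with
  | empty => simp
  | insert _ _ h ih => simp [Finset.sum_insert h, add_dotProduct, ih]

theorem stmt_3' {d : ℕ} (n m : Fin d → ℕ)
    (A : ∀ i, Matrix (Fin (n i)) (Fin (n i)) ℂ)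
    (V : ∀ i, Matrix (Fin (n i)) (Fin (m i)) ℂ)
    (hV : ∀ i, (V i)ᴴ * V i = 1)
    (c : (∀ j, Fin (n j)) → ℂ)
    (hAt : IsUnit (kronSum m fun i => (V i)ᴴ * A i * V i))
    (y : (∀ j, Fin (m j)) → ℂ)
    (hy : (kronSum m fun i => (V i)ᴴ * A i * V i) *ᵥ y = (bigKron V)ᴴ *ᵥ c) :
    (∀ i, VbarM n m V i *ᵥ
        ((VbarM n m V i)ᴴ *ᵥ c - MiM n m A V i *ᵥ (ViM n m V i *ᵥ y))
      = VbarM n m V i *ᵥ ((VbarM n m V i)ᴴ *ᵥ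
          (c - kronSum n A *ᵥ (bigKron V *ᵥ y))))
    ∧ (∀ i, star (((List.finRange d).map
          fun l => 1 - VbarM n m V l * (VbarM n m V l)ᴴ).prod *ᵥ c)
        ⬝ᵥ (VbarM n m V i *ᵥ ((VbarM n m V i)ᴴ *ᵥ
          (c - kronSum n A *ᵥ (bigKron V *ᵥ y)))) = 0)
    ∧ (∀ i j, i ≠ j →
        star (VbarM n m V i *ᵥ ((VbarM n m V i)ᴴ *ᵥ
            (c - kronSum n A *ᵥ (bigKron V *ᵥ y))))
          ⬝ᵥ (VbarM n m V j *ᵥ ((VbarM n m V j)ᴴ *ᵥ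
            (c - kronSum n A *ᵥ (bigKron V *ᵥ y)))) = 0)
    ∧ star (c - kronSum n A *ᵥ (bigKron V *ᵥ y))
          ⬝ᵥ (c - kronSum n A *ᵥ (bigKron V *ᵥ y))
      = (∑ i, star ((VbarM n m V i)ᴴ *ᵥ c
            - MiM n m A V i *ᵥ (ViM n m V i *ᵥ y))
          ⬝ᵥ ((VbarM n m V i)ᴴ *ᵥ c - MiM n m A V i *ᵥ (ViM n m V i *ᵥ y)))
        + star (((List.finRange d).map
            fun l => 1 - VbarM n m V l * (VbarM n m V l)ᴴ).prod *ᵥ c)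
          ⬝ᵥ (((List.finRange d).map
            fun l => 1 - VbarM n m V l * (VbarM n m V l)ᴴ).prod *ᵥ c) := by
  classical
  set r : (∀ j, Fin (n j)) → ℂ := c - kronSum n A *ᵥ (bigKron V *ᵥ y) with hr_def
  have hfun : (fun l => 1 - VbarM n m V l * (VbarM n m V l)ᴴ) = fM n m V := rfl
  set Pr : Matrix (∀ j, Fin (n j)) (∀ j, Fin (n j)) ℂ
    := ((List.finRange d).map (fM n m V)).prod with hPi_def
  rw [hfun]
  -- key vanishing facts
  have hKr : (bigKron V)ᴴ *ᵥ r = 0 := by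
    rw [hr_def, Matrix.mulVec_sub, Matrix.mulVec_mulVec, Matrix.mulVec_mulVec,
      Kv_A_Kv n m V A hV, hy, sub_self]
  have hPPr : PP n m V *ᵥ r = 0 := by
    rw [PP, ← Matrix.mulVec_mulVec, hKr, Matrix.mulVec_zero]
  have hM : ∀ i, (VbarM n m V i)ᴴ * (kronSum n A * bigKron V)
      = MiM n m A V i * ViM n m V i := by
    intro i
    rw [← Vbar_mul_Vi n m V i, ← Matrix.mul_assoc, ← Matrix.mul_assoc,
      Vbar_A_Vbar n m V A hV i]
  have hri : ∀ i, (VbarM n m V i)ᴴ *ᵥ c - MiM n m A V i *ᵥ (ViM n m V i *ᵥ y)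
      = (VbarM n m V i)ᴴ *ᵥ r := by
    intro i
    simp only [hr_def, Matrix.mulVec_sub, Matrix.mulVec_mulVec]
    rw [hM i]
  -- the projections of r
  set s : Fin d → ((∀ j, Fin (n j)) → ℂ) := fun i => Pp n m V i *ᵥ r with hs_def
  have hsv : ∀ i, VbarM n m V i *ᵥ ((VbarM n m V i)ᴴ *ᵥ r) = s i := by
    intro i; rw [Matrix.mulVec_mulVec]; rfl
  -- conjunct 2 : t ⊥ s i
  have hPiPp : ∀ i, Pr * Pp n m V i = 0 := by
    intro i
    refine prod_kill n m V hV _ (List.mem_finRange i) _ ?_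
    rw [fM, sub_mul, Matrix.one_mul, Pp_idem n m V hV i, sub_self]
  have hct : ∀ i, star (Pr *ᵥ c) ⬝ᵥ s i = 0 := by
    intro i
    rw [Matrix.star_mulVec, ← Matrix.dotProduct_mulVec, hs_def,
      Matrix.mulVec_mulVec, hPi_def, prod_conjT n m V hV, ← hPi_def, hPiPp i,
      Matrix.zero_mulVec, dotProduct_zero]
  -- conjunct 3 : s i ⊥ s j
  have horth : ∀ i j, i ≠ j → star (s i) ⬝ᵥ s j = 0 := by
    intro i j hij
    rw [hs_def, Matrix.star_mulVec, ← Matrix.dotProduct_mulVec,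
      Matrix.mulVec_mulVec, Pp_conjT, Pp_mul_Pp n m V hV hij, hPPr,
      dotProduct_zero]
  -- Pr kills the image of A applied to the subspace
  have hPrKA : Pr * (kronSum n A * bigKron V) = 0 := by
    rw [kronSum_eq_sum, Matrix.sum_mul, Matrix.mul_sum]
    refine Finset.sum_eq_zero fun i _ => ?_
    refine prod_kill n m V hV _ (List.mem_finRange i) _ ?_
    rw [fM, Matrix.sub_mul, Matrix.one_mul, Pp_mul_EKv n m V A hV i, sub_self]
  have hPrr : Pr *ᵥ r = Pr *ᵥ c := by
    rw [hr_def, Matrix.mulVec_sub]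
    simp only [Matrix.mulVec_mulVec]
    rw [← Matrix.mul_assoc]
    rw [show Pr * kronSum n A * bigKron V = 0 from by rw [Matrix.mul_assoc]; exact hPrKA]
    rw [Matrix.zero_mulVec, sub_zero]
  have hdecomp : r = (∑ i, s i) + Pr *ᵥ c := by
    have h1 := prod_mulVec n m V hV r hPPr (List.finRange d) (List.nodup_finRange d)
    rw [← hPi_def, hPrr] at h1
    rw [Fin.sum_univ_def, h1, hs_def]
    abel
  have hnorm_s : ∀ i, star (s i) ⬝ᵥ s i
      = star ((VbarM n m V i)ᴴ *ᵥ r) ⬝ᵥ ((VbarM n m V i)ᴴ *ᵥ r) := by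
    intro i
    rw [hs_def]
    show star ((VbarM n m V i * (VbarM n m V i)ᴴ) *ᵥ r) ⬝ᵥ ((VbarM n m V i * (VbarM n m V i)ᴴ) *ᵥ r) = _
    rw [← Matrix.mulVec_mulVec, Matrix.star_mulVec,
      ← Matrix.dotProduct_mulVec, Matrix.mulVec_mulVec, Vbar_t_Vbar n m V hV i,
      Matrix.one_mulVec]
  refine ⟨fun i => by rw [hri i], fun i => by rw [hsv i]; exact hct i,
    fun i j hij => by rw [hsv i, hsv j]; exact horth i j hij, ?_⟩
  simp only [hri, ← hnorm_s]
  have e1 : star (∑ i, s i) ⬝ᵥ (∑ i, s i) = ∑ i, star (s i) ⬝ᵥ s i := by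
    rw [star_sum, finsum_dotProduct]
    refine Finset.sum_congr rfl fun i _ => ?_
    rw [dotProduct_finsum]
    exact Finset.sum_eq_single i (fun j _ hji => horth i j (Ne.symm hji))
      (fun h => absurd (Finset.mem_univ i) h)
  have e2 : star (∑ i, s i) ⬝ᵥ (Pr *ᵥ c) = 0 := by
    rw [star_sum, finsum_dotProduct]
    refine Finset.sum_eq_zero fun i _ => ?_
    rw [Matrix.star_dotProduct, hct i, star_zero]
  have e3 : star (Pr *ᵥ c) ⬝ᵥ (∑ i, s i) = 0 := by
    rw [dotProduct_finsum]
    exact Finset.sum_eq_zero fun i _ => hct i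
  conv_lhs => rw [hdecomp]
  rw [star_add, add_dotProduct, dotProduct_add, dotProduct_add,
    e1, e2, e3, add_zero, zero_add]

/-- `V̄ᵢ rᵢ = V̄ᵢ V̄ᵢᴴ r` for each `i`; the vectors `ĉ` and
`V̄ᵢV̄ᵢᴴ r`, `i = 1,…,d`, are mutually orthogonal; and
`‖r‖₂² = Σᵢ ‖rᵢ‖₂² + ‖ĉ‖₂²` (squared norms written as `star x ⬝ᵥ x`). -/
theorem stmt_3 {d : ℕ} (n m : Fin d → ℕ)
    (A : ∀ i, Matrix (Fin (n i)) (Fin (n i)) ℂ)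
    (V : ∀ i, Matrix (Fin (n i)) (Fin (m i)) ℂ)
    (hV : ∀ i, (V i)ᴴ * V i = 1)
    (c : (∀ j, Fin (n j)) → ℂ)
    (hAt : IsUnit (kronSum m fun i => (V i)ᴴ * A i * V i))
    (y : (∀ j, Fin (m j)) → ℂ)
    (hy : (kronSum m fun i => (V i)ᴴ * A i * V i) *ᵥ y = (bigKron V)ᴴ *ᵥ c) :
    (∀ i, VbarM n m V i *ᵥ
        ((VbarM n m V i)ᴴ *ᵥ c - MiM n m A V i *ᵥ (ViM n m V i *ᵥ y))
      = VbarM n m V i *ᵥ ((VbarM n m V i)ᴴ *ᵥ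
          (c - kronSum n A *ᵥ (bigKron V *ᵥ y))))
    ∧ (∀ i, star (((List.finRange d).map
          fun l => 1 - VbarM n m V l * (VbarM n m V l)ᴴ).prod *ᵥ c)
        ⬝ᵥ (VbarM n m V i *ᵥ ((VbarM n m V i)ᴴ *ᵥ
          (c - kronSum n A *ᵥ (bigKron V *ᵥ y)))) = 0)
    ∧ (∀ i j, i ≠ j →
        star (VbarM n m V i *ᵥ ((VbarM n m V i)ᴴ *ᵥ
            (c - kronSum n A *ᵥ (bigKron V *ᵥ y))))
          ⬝ᵥ (VbarM n m V j *ᵥ ((VbarM n m V j)ᴴ *ᵥ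
            (c - kronSum n A *ᵥ (bigKron V *ᵥ y)))) = 0)
    ∧ star (c - kronSum n A *ᵥ (bigKron V *ᵥ y))
          ⬝ᵥ (c - kronSum n A *ᵥ (bigKron V *ᵥ y))
      = (∑ i, star ((VbarM n m V i)ᴴ *ᵥ c
            - MiM n m A V i *ᵥ (ViM n m V i *ᵥ y))
          ⬝ᵥ ((VbarM n m V i)ᴴ *ᵥ c - MiM n m A V i *ᵥ (ViM n m V i *ᵥ y)))
        + star (((List.finRange d).map
            fun l => 1 - VbarM n m V l * (VbarM n m V l)ᴴ).prod *ᵥ c)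
          ⬝ᵥ (((List.finRange d).map
            fun l => 1 - VbarM n m V l * (VbarM n m V l)ᴴ).prod *ᵥ c) := by
  exact stmt_3' n m A V hV c hAt y hy
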